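/- (Lemma 4 (vii)) For fixed x ∈ [0,1) and k ∈ ℝ, as n → ∞, ((n+1+x)/(n+2))·r_{n+1}(x,k) − c_n(0,x)·r_n(x,k) = (−3k/2)·(1/(n+1+x)²) + o(1/n²); i.e. n² times the difference of the two sides tends to 0. -/

import Mathlib

open MeasureTheory ProbabilityTheory Filter Real Set
open scoped ENNReal NNReal

/-- Distribution of `Z_λ = N_λ + U`, `N_λ` Poisson(λ), `U` uniform on `(0,1)`, independent. -/
noncomputable def zMeasure (l : ℝ) : Measure ℝ :=
  Measure.map (fun p : ℝ × ℝ => p.1 + p.2)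
    ((Measure.map (Nat.cast : ℕ → ℝ) (poissonMeasure l.toNNReal)).prod
      (volume.restrict (Set.Ioo (0 : ℝ) 1)))

/-- The median of `Z_λ`: `inf {t : P(Z_λ ≤ t) ≥ 1/2}`. -/
noncomputable def medianZ (l : ℝ) : ℝ :=
  sInf {t : ℝ | (1 : ℝ≥0∞) / 2 ≤ zMeasure l (Set.Iic t)}

/-- The function `H` of the main theorem. -/
noncomputable def Hfun (x : ℝ) : ℝ :=
  if x ≤ 2 / 3 then x ^ 2 * (x - 1) / 3 + 4 / 135
  else x / 3 * (x ^ 2 - 4 * x + 5) - 86 / 135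

/-- `w_n(x,k) = P(Z_{n+x} ≤ n + x + 1/3 + k/(n+x))`. -/
noncomputable def w (n : ℕ) (x k : ℝ) : ℝ :=
  (zMeasure (n + x) (Set.Iic ((n : ℝ) + x + 1 / 3 + k / (n + x)))).toReal

/-- `r_n(x,k) = k/(n+x)`. -/
noncomputable def r (n : ℕ) (x k : ℝ) : ℝ := k / (n + x)

/-- `g_n(u) = e^{-u} u^n`. -/
noncomputable def g (n : ℕ) (u : ℝ) : ℝ := Real.exp (-u) * u ^ n

/-- `c_n(v,x) = ((n+v+x)/(n+1+x))^{n+1} e^{1-v}`. -/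
noncomputable def c (n : ℕ) (v x : ℝ) : ℝ :=
  (((n : ℝ) + v + x) / ((n : ℝ) + 1 + x)) ^ (n + 1) * Real.exp (1 - v)

/-- `Δ_n(x,k) = ((n+1)!/g_{n+1}(n+1+x)) (w_{n+1}(x,k) - w_n(x,k))`. -/
noncomputable def Δfun (n : ℕ) (x k : ℝ) : ℝ :=
  ((n + 1).factorial : ℝ) / g (n + 1) ((n : ℝ) + 1 + x) * (w (n + 1) x k - w n x k)


open scoped Topology

section Lemma4viiAux

noncomputable def Lfun (t : ℝ) : ℝ := if t = 0 then 1 else Real.log (1 + t) / t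

lemma Lfun_hasDeriv : HasDerivAt Lfun (-(1/2)) 0 := by
  rw [hasDerivAt_iff_tendsto_slope, ← tendsto_sub_nhds_zero_iff]
  have hb : Tendsto (fun t : ℝ => |t| / (1 - |t|)) (𝓝[≠] 0) (𝓝 0) := by
    have h : Tendsto (fun t : ℝ => |t| / (1 - |t|)) (𝓝 0) (𝓝 (|(0:ℝ)| / (1 - |(0:ℝ)|))) :=
      Tendsto.div (continuous_abs.tendsto 0)
        ((continuous_const.sub continuous_abs).tendsto 0) (by norm_num)
    simpa using h.mono_left nhdsWithin_le_nhds
  apply squeeze_zero_norm' _ hb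
  filter_upwards [self_mem_nhdsWithin,
    eventually_nhdsWithin_of_eventually_nhds (eventually_abs_sub_lt 0 (by norm_num : (0:ℝ) < 1/2))]
    with t ht h2
  have ht0 : t ≠ 0 := ht
  have habs : |t| < 1/2 := by simpa using h2
  have habs1 : |t| < 1 := by linarith
  have key := Real.abs_log_sub_add_sum_range_le (x := -t) (by rwa [abs_neg]) 2
  simp only [Finset.sum_range_succ, Finset.sum_range_zero, abs_neg, sub_neg_eq_add] at key
  -- key : |(0 + (-t)^1/1 + (-t)^2/2) + log (1 + t)| ≤ |t|^3 / (1 - |t|)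
  have ht2 : (0:ℝ) < t^2 := by positivity
  have heq : slope Lfun 0 t - (-(1/2)) = ((-t + t^2/2) + Real.log (1+t)) / t^2 := by
    rw [slope_def_field]
    simp only [Lfun, if_neg ht0, if_pos rfl, if_true]
    field_simp
    ring
  rw [Real.norm_eq_abs, heq, abs_div, abs_of_pos ht2, div_le_iff₀ ht2]
  calc |(-t + t^2/2) + Real.log (1+t)| ≤ |t|^3 / (1 - |t|) := by
        convert key using 2; norm_num
    _ = |t| / (1 - |t|) * t^2 := by rw [← sq_abs]; ring

noncomputable def psiF (x u : ℝ) : ℝ := x * Lfun (x*u) - (1+x) * Lfun ((1+x)*u)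

lemma psiF_zero (x : ℝ) : psiF x 0 = -1 := by simp [psiF, Lfun]

lemma psiF_hasDeriv (x : ℝ) : HasDerivAt (psiF x) ((2*x+1)/2) 0 := by
  have hmk : ∀ a : ℝ, HasDerivAt (fun u : ℝ => Lfun (a*u)) (-(1/2)*a) 0 := by
    intro a
    have hL : HasDerivAt Lfun (-(1/2)) (a*0) := by rw [mul_zero]; exact Lfun_hasDeriv
    have hin : HasDerivAt (fun u : ℝ => a*u) a 0 := by
      simpa using (hasDerivAt_id (0:ℝ)).const_mul a
    exact hL.comp 0 hin
  have h := ((hmk x).const_mul x).sub ((hmk (1+x)).const_mul (1+x))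
  have : HasDerivAt (psiF x) (x * (-(1/2)*x) - (1+x) * (-(1/2)*(1+x))) 0 := h
  convert this using 1
  ring

noncomputable def Afun (x u : ℝ) : ℝ :=
  (1+2*u)⁻¹ - Real.exp (1 + (1+u) * psiF x u) / (1+x*u)

lemma Afun_zero (x : ℝ) : Afun x 0 = 0 := by
  simp [Afun, psiF_zero]

lemma Afun_hasDeriv (x : ℝ) : HasDerivAt (Afun x) (-(3/2)) 0 := by
  have hψ := psiF_hasDeriv x
  have hψ0 := psiF_zero x
  have h1 : HasDerivAt (fun u : ℝ => (1+2*u)⁻¹) (-2) 0 := by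
    have h : HasDerivAt (fun u : ℝ => 1+2*u) 2 0 := by
      simpa using ((hasDerivAt_id (0:ℝ)).const_mul 2).const_add 1
    have h' := h.fun_inv (by norm_num)
    refine h'.congr_deriv ?_
    norm_num
  have hf : HasDerivAt (fun u : ℝ => (1:ℝ)+u) 1 0 := by
    simpa using (hasDerivAt_id (0:ℝ)).const_add 1
  have h2 : HasDerivAt (fun u : ℝ => 1 + (1+u) * psiF x u)
      (1 * psiF x 0 + (1+0) * ((2*x+1)/2)) 0 := (hf.mul hψ).const_add 1
  have h3 := h2.exp
  have h4 : HasDerivAt (fun u : ℝ => (1:ℝ)+x*u) x 0 := by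
    simpa using ((hasDerivAt_id (0:ℝ)).const_mul x).const_add 1
  have h5 := h3.fun_div h4 (by norm_num)
  have h6 := h1.fun_sub h5
  have hval : 1 + (1+(0:ℝ)) * psiF x 0 = 0 := by rw [hψ0]; ring
  refine h6.congr_deriv ?_
  rw [hval, hψ0]
  norm_num
  ring

lemma exp_eq_c (x : ℝ) (hx0 : 0 ≤ x) (n : ℕ) (hn : 1 ≤ n) :
    Real.exp (1 + (1 + ((n:ℝ))⁻¹) * psiF x ((n:ℝ))⁻¹) = c n 0 x := by
  have hn' : (0:ℝ) < n := by exact_mod_cast hn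
  have hne : (n:ℝ) ≠ 0 := hn'.ne'
  have h1 : (0:ℝ) < (n:ℝ) + x := by linarith
  have h2 : (0:ℝ) < (n:ℝ) + 1 + x := by linarith
  have hL1 : x * Lfun (x * (n:ℝ)⁻¹) = (n:ℝ) * Real.log (1 + x * (n:ℝ)⁻¹) := by
    rcases eq_or_lt_of_le hx0 with h | h
    · simp [Lfun, ← h]
    · have hxne : x * (n:ℝ)⁻¹ ≠ 0 := by positivity
      rw [Lfun, if_neg hxne]
      field_simp
  have hL2 : (1+x) * Lfun ((1+x) * (n:ℝ)⁻¹) = (n:ℝ) * Real.log (1 + (1+x) * (n:ℝ)⁻¹) := by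
    have hxne : (1+x) * (n:ℝ)⁻¹ ≠ 0 := by positivity
    rw [Lfun, if_neg hxne]
    field_simp
  have e1 : 1 + x * (n:ℝ)⁻¹ = ((n:ℝ) + x) / n := by field_simp
  have e2 : 1 + (1+x) * (n:ℝ)⁻¹ = ((n:ℝ) + 1 + x) / n := by field_simp; ring
  have hψ : psiF x ((n:ℝ))⁻¹
      = (n:ℝ) * Real.log (((n:ℝ) + x) / ((n:ℝ) + 1 + x)) := by
    rw [psiF, hL1, hL2, e1, e2, Real.log_div h1.ne' hne, Real.log_div h2.ne' hne,
      Real.log_div h1.ne' h2.ne']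
    ring
  have ha : (0:ℝ) < ((n:ℝ) + x) / ((n:ℝ) + 1 + x) := by positivity
  have hpow : (((n:ℝ) + x) / ((n:ℝ) + 1 + x)) ^ (n + 1)
      = Real.exp ((((n:ℕ):ℝ) + 1) * Real.log (((n:ℝ) + x) / ((n:ℝ) + 1 + x))) := by
    have hc : ((n:ℝ) + 1) = (((n+1:ℕ)):ℝ) := by push_cast; ring
    rw [hc, ← Real.log_pow, Real.exp_log (by positivity)]
  simp only [c, add_zero, sub_zero]
  rw [hψ, hpow, ← Real.exp_add]
  congr 1
  field_simp
  ring

end Lemma4viiAux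

theorem lemma4_vii (x k : ℝ) (hx : x ∈ Set.Ico (0 : ℝ) 1) :
    Tendsto (fun n : ℕ => (n : ℝ) ^ 2 *
      ((((n : ℝ) + 1 + x) / ((n : ℝ) + 2) * r (n + 1) x k - c n 0 x * r n x k) -
        (-(3 * k) / 2 * (1 / ((n : ℝ) + 1 + x) ^ 2))))
      atTop (nhds 0) := by
  obtain ⟨hx0, hx1⟩ := hx
  have hslope := hasDerivAt_iff_tendsto_slope.mp (Afun_hasDeriv x)
  have hu : Tendsto (fun n : ℕ => ((n:ℝ))⁻¹) atTop (𝓝 0) :=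
    tendsto_inv_atTop_zero.comp tendsto_natCast_atTop_atTop
  have hu' : Tendsto (fun n : ℕ => ((n:ℝ))⁻¹) atTop (𝓝[≠] 0) := by
    apply tendsto_nhdsWithin_of_tendsto_nhds_of_eventually_within _ hu
    filter_upwards [eventually_ge_atTop 1] with n hn
    have hn' : (0:ℝ) < n := by exact_mod_cast hn
    simp [hn'.ne']
  have hT : Tendsto (fun n : ℕ => k * slope (Afun x) 0 ((n:ℝ))⁻¹
      + 3*k/2 * ((1+(1+x)*((n:ℝ))⁻¹)^2)⁻¹) atTop (𝓝 (k * (-(3/2)) + 3*k/2 * 1)) := by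
    apply Tendsto.add
    · exact (hslope.comp hu').const_mul k
    · have h1 : Tendsto (fun n : ℕ => 1+(1+x)*((n:ℝ))⁻¹) atTop (𝓝 1) := by
        simpa using (hu.const_mul (1+x)).const_add 1
      have h2 : Tendsto (fun n : ℕ => ((1+(1+x)*((n:ℝ))⁻¹)^2)⁻¹) atTop (𝓝 1) := by
        simpa using (h1.pow 2).inv₀ (by norm_num)
      simpa using h2.const_mul (3*k/2)
  have hz : k * (-(3/2)) + 3*k/2 * 1 = 0 := by ring
  rw [hz] at hT
  apply hT.congr'
  filter_upwards [eventually_ge_atTop 1] with n hn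
  have hn' : (0:ℝ) < n := by exact_mod_cast hn
  have hne : (n:ℝ) ≠ 0 := hn'.ne'
  have h1 : (0:ℝ) < (n:ℝ) + x := by linarith
  have h2 : (0:ℝ) < (n:ℝ) + 1 + x := by linarith
  have h3 : (0:ℝ) < (n:ℝ) + 2 := by linarith
  rw [slope_def_field, Afun_zero x]
  simp only [Afun, exp_eq_c x hx0 n hn, r]
  push_cast
  set C := c n 0 x with hC
  have h4 : (0:ℝ) < 1 + 2*((n:ℝ))⁻¹ := by positivity
  have h5 : (0:ℝ) < 1 + x*((n:ℝ))⁻¹ := by positivity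
  have h6 : (0:ℝ) < 1 + (1+x)*((n:ℝ))⁻¹ := by positivity
  field_simp
  ring
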